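/- arXiv:2209.07882 — 4 statements merged into one kernel-verified Lean document; each statement's English description precedes it below -/
import Mathlib

section
/- Let a > 0 and b > 0, and let ω > 0 satisfy the transcendental equation 1/b = ω·tan(ω·a). Then for every x ∈ [−a, a], ∫_{−a}^{a} e^{−|x−y|/b} · cos(ω·y) dy = (2b/(1 + b²ω²)) · cos(ω·x); that is, cos(ω·x) is an eigenfunction of the exponential covariance kernel on [−a, a] with eigenvalue 2b/(1 + b²ω²). -/
open Real intervalIntegral

lemma exp_cos_antideriv (c w : ℝ) (hD : c ^ 2 + w ^ 2 ≠ 0) (y : ℝ) :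
    HasDerivAt (fun t => Real.exp (c * t) * (c * Real.cos (w * t) + w * Real.sin (w * t))
        / (c ^ 2 + w ^ 2)) (Real.exp (c * y) * Real.cos (w * y)) y := by
  have hc : HasDerivAt (fun t : ℝ => c * t) c y := by
    simpa using (hasDerivAt_id y).const_mul c
  have hw : HasDerivAt (fun t : ℝ => w * t) w y := by
    simpa using (hasDerivAt_id y).const_mul w
  have h1 : HasDerivAt (fun t => Real.exp (c * t)) (Real.exp (c * y) * c) y :=
    (Real.hasDerivAt_exp (c * y)).comp y hc
  have h2 : HasDerivAt (fun t => Real.cos (w * t)) (-Real.sin (w * y) * w) y :=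
    (Real.hasDerivAt_cos (w * y)).comp y hw
  have h3 : HasDerivAt (fun t => Real.sin (w * t)) (Real.cos (w * y) * w) y :=
    (Real.hasDerivAt_sin (w * y)).comp y hw
  have h := ((h1.mul ((h2.const_mul c).add (h3.const_mul w)))).div_const (c ^ 2 + w ^ 2)
  refine h.congr_deriv ?_
  simp only [Pi.add_apply]; rw [div_eq_iff hD]
  ring

lemma int_exp_cos (c w : ℝ) (hD : c ^ 2 + w ^ 2 ≠ 0) (l r : ℝ) :
    ∫ y in l..r, Real.exp (c * y) * Real.cos (w * y)
      = Real.exp (c * r) * (c * Real.cos (w * r) + w * Real.sin (w * r)) / (c ^ 2 + w ^ 2)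
        - Real.exp (c * l) * (c * Real.cos (w * l) + w * Real.sin (w * l)) / (c ^ 2 + w ^ 2) := by
  refine intervalIntegral.integral_eq_sub_of_hasDerivAt (fun y _ => exp_cos_antideriv c w hD y) ?_
  exact (Continuous.mul (by continuity) (by continuity)).intervalIntegrable l r

/-- Eigenfunction property of the exponential covariance kernel: if `ω > 0` solves the
transcendental equation `1/b = ω·tan(ω·a)`, then `cos(ω·x)` is an eigenfunction with
eigenvalue `2b/(1 + b²ω²)`. -/
theorem exp_kernel_cos_eigenfunction
    (a b ω : ℝ) (ha : 0 < a) (hb : 0 < b) (hω : 0 < ω)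
    (htrans : 1 / b = ω * Real.tan (ω * a)) :
    ∀ x ∈ Set.Icc (-a) a,
      ∫ y in (-a)..a, Real.exp (-|x - y| / b) * Real.cos (ω * y)
        = (2 * b / (1 + b ^ 2 * ω ^ 2)) * Real.cos (ω * x) := by
  intro x hx
  obtain ⟨hx1, hx2⟩ := hx
  have hb' : b ≠ 0 := ne_of_gt hb
  have hD : (1 / b) ^ 2 + ω ^ 2 ≠ 0 := by positivity
  have hD' : (-(1 / b)) ^ 2 + ω ^ 2 ≠ 0 := by
    rw [neg_pow]; simpa using hD
  have hcont : Continuous fun y => Real.exp (-|x - y| / b) * Real.cos (ω * y) := by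
    continuity
  have hsplit :
      ∫ y in (-a)..a, Real.exp (-|x - y| / b) * Real.cos (ω * y)
        = (∫ y in (-a)..x, Real.exp (-|x - y| / b) * Real.cos (ω * y))
          + ∫ y in x..a, Real.exp (-|x - y| / b) * Real.cos (ω * y) :=
    (intervalIntegral.integral_add_adjacent_intervals (hcont.intervalIntegrable _ _)
      (hcont.intervalIntegrable _ _)).symm
  have e1 : ∫ y in (-a)..x, Real.exp (-|x - y| / b) * Real.cos (ω * y)
      = Real.exp (-x / b) * ∫ y in (-a)..x, Real.exp ((1 / b) * y) * Real.cos (ω * y) := by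
    rw [← intervalIntegral.integral_const_mul]
    refine intervalIntegral.integral_congr fun y hy => ?_
    rw [Set.uIcc_of_le hx1] at hy
    have : |x - y| = x - y := abs_of_nonneg (by linarith [hy.2])
    rw [this, ← mul_assoc, ← Real.exp_add]
    ring_nf
  have e2 : ∫ y in x..a, Real.exp (-|x - y| / b) * Real.cos (ω * y)
      = Real.exp (x / b) * ∫ y in x..a, Real.exp ((-(1 / b)) * y) * Real.cos (ω * y) := by
    rw [← intervalIntegral.integral_const_mul]
    refine intervalIntegral.integral_congr fun y hy => ?_
    rw [Set.uIcc_of_le hx2] at hy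
    have : |x - y| = y - x := by
      rw [abs_sub_comm]; exact abs_of_nonneg (by linarith [hy.1])
    rw [this, ← mul_assoc, ← Real.exp_add]
    ring_nf
  rw [hsplit, e1, e2, int_exp_cos _ _ hD, int_exp_cos _ _ hD']
  -- transcendental condition
  have hC : Real.cos (ω * a) ≠ 0 := by
    intro h
    rw [Real.tan_eq_sin_div_cos, h, div_zero, mul_zero] at htrans
    exact absurd htrans (by positivity)
  have hcs : (1 / b) * Real.cos (ω * a) = ω * Real.sin (ω * a) := by
    rw [Real.tan_eq_sin_div_cos] at htrans
    field_simp at htrans ⊢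
    linarith [htrans]
  have hma : ω * (-a) = -(ω * a) := by ring
  rw [hma, Real.cos_neg, Real.sin_neg]
  have harg1 : (1 / b) * x = x / b := by ring
  have harg2 : (-(1 / b)) * x = -(x / b) := by ring
  have harg3 : (1 / b) * (-a) = -(a / b) := by ring
  have harg4 : (-(1 / b)) * a = -(a / b) := by ring
  have hs : Real.sin (ω * a) = Real.cos (ω * a) / (b * ω) := by
    field_simp at hcs ⊢
    linarith [hcs]
  rw [harg1, harg2, harg3, harg4, Real.exp_neg (x / b), Real.exp_neg (a / b),
    show -x / b = -(x / b) by ring, Real.exp_neg (x / b), hs]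
  set E := Real.exp (x / b) with hE
  set F := Real.exp (a / b) with hF
  have hEne : E ≠ 0 := Real.exp_ne_zero _
  have hFne : F ≠ 0 := Real.exp_ne_zero _
  have hDen : 1 + b ^ 2 * ω ^ 2 ≠ 0 := by positivity
  field_simp
  ring
end

section
/- Let a > 0 and b > 0, and let ω > 0 satisfy the transcendental equation ω + (1/b)·tan(ω·a) = 0. Then for every x ∈ [−a, a], ∫_{−a}^{a} e^{−|x−y|/b} · sin(ω·y) dy = (2b/(1 + b²ω²)) · sin(ω·x); that is, sin(ω·x) is an eigenfunction of the exponential covariance kernel on [−a, a] with eigenvalue 2b/(1 + b²ω²). -/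
open Real intervalIntegral

private lemma deriv1 (b ω : ℝ) (hb : 0 < b) (hK : (1 + b ^ 2 * ω ^ 2) ≠ 0) (y : ℝ) :
    HasDerivAt (fun y => (b * Real.exp (y / b) * (Real.sin (ω * y) - b * ω * Real.cos (ω * y)))
        / (1 + b ^ 2 * ω ^ 2))
      (Real.exp (y / b) * Real.sin (ω * y)) y := by
  have he : HasDerivAt (fun y : ℝ => Real.exp (y / b)) (Real.exp (y / b) * (1 / b)) y := by
    have := ((hasDerivAt_id y).div_const b).exp
    simpa using this
  have hs : HasDerivAt (fun y : ℝ => Real.sin (ω * y)) (Real.cos (ω * y) * ω) y := by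
    have := ((hasDerivAt_id y).const_mul ω).sin
    simpa [mul_comm] using this
  have hc : HasDerivAt (fun y : ℝ => Real.cos (ω * y)) (-Real.sin (ω * y) * ω) y := by
    have := ((hasDerivAt_id y).const_mul ω).cos
    simpa [mul_comm] using this
  have h := (((he.const_mul b).mul (hs.sub ((hc.const_mul (b * ω))))).div_const
    (1 + b ^ 2 * ω ^ 2))
  refine h.congr_deriv ?_
  simp only [Pi.sub_apply]
  field_simp
  ring

private lemma deriv2 (b ω : ℝ) (hb : 0 < b) (hK : (1 + b ^ 2 * ω ^ 2) ≠ 0) (y : ℝ) :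
    HasDerivAt (fun y => (-b * Real.exp (-y / b) * (Real.sin (ω * y) + b * ω * Real.cos (ω * y)))
        / (1 + b ^ 2 * ω ^ 2))
      (Real.exp (-y / b) * Real.sin (ω * y)) y := by
  have he : HasDerivAt (fun y : ℝ => Real.exp (-y / b)) (Real.exp (-y / b) * (-1 / b)) y := by
    have := (((hasDerivAt_id y).neg).div_const b).exp
    simpa [neg_div] using this
  have hs : HasDerivAt (fun y : ℝ => Real.sin (ω * y)) (Real.cos (ω * y) * ω) y := by
    have := ((hasDerivAt_id y).const_mul ω).sin
    simpa [mul_comm] using this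
  have hc : HasDerivAt (fun y : ℝ => Real.cos (ω * y)) (-Real.sin (ω * y) * ω) y := by
    have := ((hasDerivAt_id y).const_mul ω).cos
    simpa [mul_comm] using this
  have h := (((he.const_mul (-b)).mul (hs.add ((hc.const_mul (b * ω))))).div_const
    (1 + b ^ 2 * ω ^ 2))
  refine h.congr_deriv ?_
  simp only [Pi.add_apply]
  field_simp
  ring

/-- Eigenfunction property of the exponential covariance kernel: if `ω > 0` solves the
transcendental equation `ω + (1/b)·tan(ω·a) = 0`, then `sin(ω·x)` is an eigenfunction with
eigenvalue `2b/(1 + b²ω²)`. -/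
theorem exp_kernel_sin_eigenfunction
    (a b ω : ℝ) (ha : 0 < a) (hb : 0 < b) (hω : 0 < ω)
    (htrans : ω + (1 / b) * Real.tan (ω * a) = 0) :
    ∀ x ∈ Set.Icc (-a) a,
      ∫ y in (-a)..a, Real.exp (-|x - y| / b) * Real.sin (ω * y)
        = (2 * b / (1 + b ^ 2 * ω ^ 2)) * Real.sin (ω * x) := by
  have hK : (1 + b ^ 2 * ω ^ 2) ≠ 0 := by positivity
  -- transcendental relation
  have hsa : Real.sin (ω * a) + b * ω * Real.cos (ω * a) = 0 := by
    by_cases hc : Real.cos (ω * a) = 0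
    · rw [Real.tan_eq_sin_div_cos, hc, div_zero, mul_zero, add_zero] at htrans
      exact absurd htrans hω.ne'
    · rw [Real.tan_eq_sin_div_cos] at htrans
      field_simp at htrans
      nlinarith [htrans]
  rintro x ⟨hx1, hx2⟩
  -- continuity / integrability
  have hcont : Continuous (fun y : ℝ => Real.exp (-|x - y| / b) * Real.sin (ω * y)) := by
    fun_prop
  have hsplit :
      (∫ y in (-a)..x, Real.exp (-|x - y| / b) * Real.sin (ω * y))
        + (∫ y in x..a, Real.exp (-|x - y| / b) * Real.sin (ω * y))
      = ∫ y in (-a)..a, Real.exp (-|x - y| / b) * Real.sin (ω * y) :=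
    intervalIntegral.integral_add_adjacent_intervals
      (hcont.intervalIntegrable _ _) (hcont.intervalIntegrable _ _)
  rw [← hsplit]
  -- rewrite first integral (y ≤ x)
  have h1 : (∫ y in (-a)..x, Real.exp (-|x - y| / b) * Real.sin (ω * y))
      = ∫ y in (-a)..x, Real.exp (-x / b) * (Real.exp (y / b) * Real.sin (ω * y)) := by
    apply intervalIntegral.integral_congr
    intro y hy
    rw [Set.uIcc_of_le (by linarith)] at hy
    have hyx : y ≤ x := hy.2
    have habs : |x - y| = x - y := abs_of_nonneg (by linarith)
    dsimp only
    rw [habs, show -(x - y) / b = -x / b + y / b by ring, Real.exp_add]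
    ring
  have h2 : (∫ y in x..a, Real.exp (-|x - y| / b) * Real.sin (ω * y))
      = ∫ y in x..a, Real.exp (x / b) * (Real.exp (-y / b) * Real.sin (ω * y)) := by
    apply intervalIntegral.integral_congr
    intro y hy
    rw [Set.uIcc_of_le (by linarith)] at hy
    have hxy : x ≤ y := hy.1
    have habs : |x - y| = y - x := (abs_of_nonpos (by linarith)).trans (by ring)
    dsimp only
    rw [habs, show -(y - x) / b = x / b + -y / b by ring, Real.exp_add]
    ring
  rw [h1, h2, intervalIntegral.integral_const_mul, intervalIntegral.integral_const_mul]
  -- FTC evaluations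
  have hcont1 : Continuous (fun y : ℝ => Real.exp (y / b) * Real.sin (ω * y)) := by fun_prop
  have hcont2 : Continuous (fun y : ℝ => Real.exp (-y / b) * Real.sin (ω * y)) := by fun_prop
  have hI1 : (∫ y in (-a)..x, Real.exp (y / b) * Real.sin (ω * y))
      = (b * Real.exp (x / b) * (Real.sin (ω * x) - b * ω * Real.cos (ω * x)))
          / (1 + b ^ 2 * ω ^ 2)
        - (b * Real.exp (-a / b) * (Real.sin (ω * (-a)) - b * ω * Real.cos (ω * (-a))))
          / (1 + b ^ 2 * ω ^ 2) := by
    have := intervalIntegral.integral_eq_sub_of_hasDerivAt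
      (fun y _ => deriv1 b ω hb hK y) ((hcont1).intervalIntegrable (-a) x)
    simpa using this
  have hI2 : (∫ y in x..a, Real.exp (-y / b) * Real.sin (ω * y))
      = (-b * Real.exp (-a / b) * (Real.sin (ω * a) + b * ω * Real.cos (ω * a)))
          / (1 + b ^ 2 * ω ^ 2)
        - (-b * Real.exp (-x / b) * (Real.sin (ω * x) + b * ω * Real.cos (ω * x)))
          / (1 + b ^ 2 * ω ^ 2) := by
    have := intervalIntegral.integral_eq_sub_of_hasDerivAt
      (fun y _ => deriv2 b ω hb hK y) ((hcont2).intervalIntegrable x a)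
    simpa using this
  rw [hI1, hI2]
  have hee : Real.exp (-x / b) * Real.exp (x / b) = 1 := by
    rw [← Real.exp_add]; ring_nf; exact Real.exp_zero
  have hsa' : Real.sin (ω * a) = -(b * ω * Real.cos (ω * a)) := by linarith
  rw [mul_neg, Real.sin_neg, Real.cos_neg, hsa']
  linear_combination (2 * b * Real.sin (ω * x) / (1 + b ^ 2 * ω ^ 2)) * hee
end

section
/- For every real polynomial p(x, y) in two variables of total degree at most 5, ∫_{ℝ²} p dγ² = (1/6)·[p(−√3, 0) + p(√3, 0) + p(0, −√3) + p(0, √3)] + (1/4)·[p(−1, −1) + p(−1, 1) + p(1, −1) + p(1, 1)] − (1/2)·[p(−1, 0) + p(1, 0) + p(0, −1) + p(0, 1)] + (4/3)·p(0, 0); that is, the 13-point level-3 Smolyak sparse grid quadrature rule built from one-dimensional Gauss–Hermite rules integrates exactly all bivariate polynomials of total degree up to 5 against the two-dimensional standard Gaussian measure. -/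
open MeasureTheory ProbabilityTheory Real Filter
open scoped ENNReal NNReal


lemma integrable_pow_gauss (n : ℕ) :
    Integrable (fun x : ℝ => x ^ n * rexp (-(1/2) * x ^ 2)) := by
  have hs : (-1 : ℝ) < (n : ℝ) := lt_of_lt_of_le (by norm_num) (Nat.cast_nonneg n)
  have h := integrable_rpow_mul_exp_neg_mul_sq (b := 1/2) (by norm_num) hs
  simpa [Real.rpow_natCast] using h

lemma gauss_odd (n : ℕ) (hn : Odd n) :
    ∫ x : ℝ, x ^ n * rexp (-(1/2) * x ^ 2) = 0 := by
  have e : MeasurePreserving (fun x : ℝ => -x) volume volume :=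
    Measure.measurePreserving_neg volume
  have h := e.integral_comp (Homeomorph.neg ℝ).isClosedEmbedding.measurableEmbedding
      (fun x : ℝ => x ^ n * rexp (-(1/2) * x ^ 2))
  simp only [hn.neg_pow, neg_sq, neg_mul, integral_neg, neg_mul] at h
  have h2 : ∀ x : ℝ, rexp (-(1 / 2 * x ^ 2)) = rexp (-(1/2) * x ^ 2) := by
    intro x; ring_nf
  simp only [h2] at h
  linarith

lemma hasDerivAt_gaussv (x : ℝ) :
    HasDerivAt (fun x : ℝ => rexp (-(1/2) * x ^ 2)) (-x * rexp (-(1/2) * x ^ 2)) x := by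
  have h := (((hasDerivAt_pow 2 x).const_mul (-(1/2 : ℝ)))).exp
  convert h using 1
  ring_nf

lemma gauss_rec (n : ℕ) :
    ∫ x : ℝ, x ^ (n + 2) * rexp (-(1/2) * x ^ 2)
      = (n + 1 : ℝ) * ∫ x : ℝ, x ^ n * rexp (-(1/2) * x ^ 2) := by
  have hu : ∀ x : ℝ, HasDerivAt (fun x : ℝ => x ^ (n + 1)) (((n:ℝ)+1) * x ^ n) x := by
    intro x; simpa using hasDerivAt_pow (n+1) x
  have huv' : Integrable ((fun x : ℝ => x ^ (n+1)) * (fun x => -x * rexp (-(1/2) * x ^ 2))) := by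
    have := (integrable_pow_gauss (n+2)).neg
    apply this.congr
    filter_upwards with x
    simp [Pi.mul_apply]; ring
  have hu'v : Integrable ((fun x : ℝ => ((n:ℝ)+1) * x ^ n) * (fun x => rexp (-(1/2) * x ^ 2))) := by
    have := (integrable_pow_gauss n).const_mul ((n:ℝ)+1)
    apply this.congr
    filter_upwards with x
    simp [Pi.mul_apply]; ring
  have huv : Integrable ((fun x : ℝ => x ^ (n+1)) * (fun x => rexp (-(1/2) * x ^ 2))) := by
    have := integrable_pow_gauss (n+1)
    apply this.congr
    filter_upwards with x
    simp [Pi.mul_apply]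
  have H := integral_mul_deriv_eq_deriv_mul_of_integrable (fun x _ => hu x) (fun x _ => hasDerivAt_gaussv x) huv' hu'v huv
  have l1 : ∫ x : ℝ, x ^ (n+1) * (-x * rexp (-(1/2) * x ^ 2))
      = -∫ x : ℝ, x ^ (n + 2) * rexp (-(1/2) * x ^ 2) := by
    rw [← integral_neg]
    congr 1; funext x; ring
  have l2 : ∫ x : ℝ, ((n:ℝ)+1) * x ^ n * rexp (-(1/2) * x ^ 2)
      = ((n:ℝ)+1) * ∫ x : ℝ, x ^ n * rexp (-(1/2) * x ^ 2) := by
    rw [← MeasureTheory.integral_const_mul]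
    congr 1; funext x; ring
  rw [l1, l2] at H
  linarith

lemma gauss_zero : ∫ x : ℝ, rexp (-(1/2) * x ^ 2) = Real.sqrt (2 * π) := by
  have h := integral_gaussian (1/2)
  rw [h]; congr 1; field_simp

lemma gauss_pdf_eq (x : ℝ) :
    gaussianPDFReal 0 1 x = (Real.sqrt (2 * π))⁻¹ * rexp (-(1/2) * x ^ 2) := by
  simp only [gaussianPDFReal, NNReal.coe_one, mul_one, sub_zero]
  ring_nf

lemma gaussianReal_eq_withDensity :
    gaussianReal 0 1 = volume.withDensity
      (fun x => ((gaussianPDFReal 0 1 x).toNNReal : ℝ≥0∞)) := by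
  rw [gaussianReal_of_var_ne_zero 0 one_ne_zero]
  rfl

lemma integral_gaussianReal_eq (g : ℝ → ℝ) :
    ∫ x, g x ∂(gaussianReal 0 1) = ∫ x, gaussianPDFReal 0 1 x * g x := by
  rw [gaussianReal_eq_withDensity,
    integral_withDensity_eq_integral_smul
      ((measurable_gaussianPDFReal 0 1).real_toNNReal) g]
  congr 1
  funext x
  rw [NNReal.smul_def, Real.coe_toNNReal _ (gaussianPDFReal_nonneg 0 1 x), smul_eq_mul]

lemma integrable_pow_gaussianReal (n : ℕ) :
    Integrable (fun x : ℝ => x ^ n) (gaussianReal 0 1) := by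
  rw [gaussianReal_eq_withDensity,
    integrable_withDensity_iff_integrable_smul
      ((measurable_gaussianPDFReal 0 1).real_toNNReal)]
  have h := (integrable_pow_gauss n).const_mul ((Real.sqrt (2 * π))⁻¹)
  apply h.congr
  filter_upwards with x
  rw [NNReal.smul_def, Real.coe_toNNReal _ (gaussianPDFReal_nonneg 0 1 x), smul_eq_mul,
    gauss_pdf_eq]
  ring

lemma integral_pow_gaussianReal (n : ℕ) :
    ∫ x, x ^ n ∂(gaussianReal 0 1)
      = (Real.sqrt (2 * π))⁻¹ * ∫ x : ℝ, x ^ n * rexp (-(1/2) * x ^ 2) := by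
  rw [integral_gaussianReal_eq, ← MeasureTheory.integral_const_mul]
  congr 1; funext x; rw [gauss_pdf_eq]; ring

lemma sqrt_two_pi_pos : 0 < Real.sqrt (2 * π) :=
  Real.sqrt_pos.2 (by positivity)

/-- Moments of the standard gaussian, as a function. -/
noncomputable def gaussMoment (n : ℕ) : ℝ := ∫ x, x ^ n ∂(gaussianReal 0 1)

lemma gaussMoment_odd (n : ℕ) (hn : Odd n) : gaussMoment n = 0 := by
  rw [gaussMoment, integral_pow_gaussianReal, gauss_odd n hn, mul_zero]

lemma gaussMoment_zero : gaussMoment 0 = 1 := by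
  rw [gaussMoment, integral_pow_gaussianReal]
  simp only [pow_zero, one_mul]
  rw [gauss_zero, inv_mul_cancel₀ sqrt_two_pi_pos.ne']

lemma gaussMoment_two : gaussMoment 2 = 1 := by
  rw [gaussMoment, integral_pow_gaussianReal]
  have h := gauss_rec 0
  simp only [pow_zero, one_mul] at h
  rw [show (0:ℕ)+2 = 2 by norm_num] at h
  rw [h, gauss_zero]
  push_cast
  rw [zero_add, one_mul, inv_mul_cancel₀ sqrt_two_pi_pos.ne']

lemma gaussMoment_four : gaussMoment 4 = 3 := by
  rw [gaussMoment, integral_pow_gaussianReal]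
  have h2 := gauss_rec 0
  have h4 := gauss_rec 2
  simp only [pow_zero, one_mul] at h2
  rw [show (0:ℕ)+2 = 2 by norm_num] at h2
  rw [show (2:ℕ)+2 = 4 by norm_num] at h4
  rw [h4, h2, gauss_zero]
  have := sqrt_two_pi_pos.ne'
  field_simp
  ring

noncomputable abbrev gpi : Measure (Fin 2 → ℝ) := Measure.pi fun _ : Fin 2 => gaussianReal 0 1

lemma mp_fta : MeasurePreserving (MeasurableEquiv.finTwoArrow : (Fin 2 → ℝ) ≃ᵐ ℝ × ℝ)
    gpi ((gaussianReal 0 1).prod (gaussianReal 0 1)) :=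
  measurePreserving_finTwoArrow (gaussianReal 0 1)

lemma integrable_mono2 (a b : ℕ) :
    Integrable (fun x : Fin 2 → ℝ => (x 0) ^ a * (x 1) ^ b) gpi := by
  have h : Integrable (fun z : ℝ × ℝ => z.1 ^ a * z.2 ^ b)
      ((gaussianReal 0 1).prod (gaussianReal 0 1)) :=
    (integrable_pow_gaussianReal a).mul_prod (integrable_pow_gaussianReal b)
  have := (MeasurePreserving.integrable_comp_emb (g := fun z : ℝ × ℝ => z.1 ^ a * z.2 ^ b)
    mp_fta (MeasurableEquiv.finTwoArrow : (Fin 2 → ℝ) ≃ᵐ ℝ × ℝ).measurableEmbedding).2 h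
  simpa [Function.comp_def] using this

lemma integral_mono2 (a b : ℕ) :
    ∫ x : Fin 2 → ℝ, (x 0) ^ a * (x 1) ^ b ∂gpi = gaussMoment a * gaussMoment b := by
  have h := mp_fta.integral_comp' (fun z : ℝ × ℝ => z.1 ^ a * z.2 ^ b)
  rw [show (∫ x : Fin 2 → ℝ, (x 0) ^ a * (x 1) ^ b ∂gpi)
      = ∫ x : Fin 2 → ℝ, (fun z : ℝ × ℝ => z.1 ^ a * z.2 ^ b)
          (MeasurableEquiv.finTwoArrow x) ∂gpi from rfl, h,
    integral_prod_mul (f := fun y : ℝ => y ^ a) (g := fun y : ℝ => y ^ b)]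
  rfl
lemma quad_key (a b : ℕ) (h : a + b ≤ 5) :
    gaussMoment a * gaussMoment b =
      1/6 * ((-Real.sqrt 3)^a * (0:ℝ)^b + (Real.sqrt 3)^a * (0:ℝ)^b
          + (0:ℝ)^a * (-Real.sqrt 3)^b + (0:ℝ)^a * (Real.sqrt 3)^b)
      + 1/4 * ((-1:ℝ)^a * (-1:ℝ)^b + (-1:ℝ)^a * (1:ℝ)^b
          + (1:ℝ)^a * (-1:ℝ)^b + (1:ℝ)^a * (1:ℝ)^b)
      - 1/2 * ((-1:ℝ)^a * (0:ℝ)^b + (1:ℝ)^a * (0:ℝ)^b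
          + (0:ℝ)^a * (-1:ℝ)^b + (0:ℝ)^a * (1:ℝ)^b)
      + 4/3 * ((0:ℝ)^a * (0:ℝ)^b) := by
  have h0 := gaussMoment_zero
  have h2 := gaussMoment_two
  have h4 := gaussMoment_four
  have h1 := gaussMoment_odd 1 ⟨0, rfl⟩
  have h3 := gaussMoment_odd 3 ⟨1, rfl⟩
  have h5 := gaussMoment_odd 5 ⟨2, rfl⟩
  have hs2 : Real.sqrt 3 ^ 2 = 3 := Real.sq_sqrt (by norm_num)
  have hs4 : Real.sqrt 3 ^ 4 = 9 := by
    rw [show (4:ℕ) = 2 * 2 from rfl, pow_mul, hs2]; norm_num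
  have ha : a ≤ 5 := le_trans (Nat.le_add_right _ _) h
  interval_cases a <;> (
    have hb : b ≤ 5 := by omega
    interval_cases b <;>
      (first
        | omega
        | (simp only [h0, h1, h2, h3, h4, h5]; norm_num [neg_pow]; done)
        | (simp only [h0, h1, h2, h3, h4, h5]; norm_num [neg_pow]; linarith [hs2, hs4])
        | (simp only [h0, h1, h2, h3, h4, h5]; norm_num [neg_pow]; ring_nf; linarith [hs2, hs4])))

/-- The 13-point level-3 Smolyak sparse grid quadrature rule built from one-dimensional
Gauss–Hermite rules integrates exactly all bivariate polynomials of total degree up to `5`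
against the two-dimensional standard Gaussian measure. -/
theorem smolyak_level3_sparse_grid (p : MvPolynomial (Fin 2) ℝ)
    (hp : p.totalDegree ≤ 5) :
    (∫ x : Fin 2 → ℝ, MvPolynomial.eval x p
        ∂(Measure.pi fun _ : Fin 2 => gaussianReal 0 1))
      = (1 / 6) * (MvPolynomial.eval ![-Real.sqrt 3, 0] p
            + MvPolynomial.eval ![Real.sqrt 3, 0] p
            + MvPolynomial.eval ![0, -Real.sqrt 3] p
            + MvPolynomial.eval ![0, Real.sqrt 3] p)
        + (1 / 4) * (MvPolynomial.eval ![-1, -1] p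
            + MvPolynomial.eval ![-1, 1] p
            + MvPolynomial.eval ![1, -1] p
            + MvPolynomial.eval ![1, 1] p)
        - (1 / 2) * (MvPolynomial.eval ![-1, 0] p
            + MvPolynomial.eval ![1, 0] p
            + MvPolynomial.eval ![0, -1] p
            + MvPolynomial.eval ![0, 1] p)
        + (4 / 3) * MvPolynomial.eval ![0, 0] p := by
  classical
  have expand : ∀ v : Fin 2 → ℝ, MvPolynomial.eval v p
      = ∑ d ∈ p.support, MvPolynomial.coeff d p * (v 0 ^ d 0 * v 1 ^ d 1) := by
    intro v
    rw [MvPolynomial.eval_eq']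
    exact Finset.sum_congr rfl fun d _ => by rw [Fin.prod_univ_two]
  have hdeg : ∀ d ∈ p.support, d 0 + d 1 ≤ 5 := by
    intro d hd
    have h1 : (d.sum fun _ e => e) ≤ p.totalDegree := MvPolynomial.le_totalDegree hd
    have h2 : (d.sum fun _ e => e) = d 0 + d 1 := by
      rw [Finsupp.sum_fintype _ _ (fun _ => rfl), Fin.sum_univ_two]
    omega
  have lhs_eq : (∫ x : Fin 2 → ℝ, MvPolynomial.eval x p ∂gpi)
      = ∑ d ∈ p.support, MvPolynomial.coeff d p * (gaussMoment (d 0) * gaussMoment (d 1)) := by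
    simp_rw [expand]
    rw [integral_finset_sum _ fun d _ => (integrable_mono2 (d 0) (d 1)).const_mul _]
    exact Finset.sum_congr rfl fun d _ => by
      rw [MeasureTheory.integral_const_mul, integral_mono2]
  rw [show (Measure.pi fun _ : Fin 2 => gaussianReal 0 1) = gpi from rfl, lhs_eq]
  have rhs_eq : ∀ d ∈ p.support,
      MvPolynomial.coeff d p * (gaussMoment (d 0) * gaussMoment (d 1))
        = MvPolynomial.coeff d p *
          (1/6 * ((-Real.sqrt 3)^(d 0) * (0:ℝ)^(d 1) + (Real.sqrt 3)^(d 0) * (0:ℝ)^(d 1)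
              + (0:ℝ)^(d 0) * (-Real.sqrt 3)^(d 1) + (0:ℝ)^(d 0) * (Real.sqrt 3)^(d 1))
          + 1/4 * ((-1:ℝ)^(d 0) * (-1:ℝ)^(d 1) + (-1:ℝ)^(d 0) * (1:ℝ)^(d 1)
              + (1:ℝ)^(d 0) * (-1:ℝ)^(d 1) + (1:ℝ)^(d 0) * (1:ℝ)^(d 1))
          - 1/2 * ((-1:ℝ)^(d 0) * (0:ℝ)^(d 1) + (1:ℝ)^(d 0) * (0:ℝ)^(d 1)
              + (0:ℝ)^(d 0) * (-1:ℝ)^(d 1) + (0:ℝ)^(d 0) * (1:ℝ)^(d 1))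
          + 4/3 * ((0:ℝ)^(d 0) * (0:ℝ)^(d 1))) :=
    fun d hd => by rw [quad_key _ _ (hdeg d hd)]
  rw [Finset.sum_congr rfl rhs_eq]
  simp only [expand, Matrix.cons_val_zero, Matrix.cons_val_one, Matrix.head_cons,
    Finset.mul_sum, ← Finset.sum_add_distrib, ← Finset.sum_sub_distrib]
  exact Finset.sum_congr rfl fun d _ => by ring
end

section
/- Let a > 0 and b > 0, and let ω₁ > 0 and ω₂ > 0 be two distinct solutions (ω₁ ≠ ω₂) of the transcendental equation 1/b = ω·tan(ω·a). Then ∫_{−a}^{a} cos(ω₁·x)·cos(ω₂·x) dx = 0; that is, eigenfunctions of the exponential covariance kernel associated with distinct odd-index frequencies are orthogonal on [−a, a]. -/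
open Real intervalIntegral

/-- Eigenfunctions of the exponential covariance kernel associated with distinct
odd-index frequencies are orthogonal on `[-a, a]`: if `ω₁ ≠ ω₂` both solve
`1/b = ω·tan(ω·a)`, then `∫_{-a}^{a} cos(ω₁·x)·cos(ω₂·x) dx = 0`. -/
theorem exp_kernel_cos_eigenfunctions_orthogonal
    (a b ω₁ ω₂ : ℝ) (ha : 0 < a) (hb : 0 < b)
    (hω₁ : 0 < ω₁) (hω₂ : 0 < ω₂) (hne : ω₁ ≠ ω₂)
    (htrans₁ : 1 / b = ω₁ * Real.tan (ω₁ * a))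
    (htrans₂ : 1 / b = ω₂ * Real.tan (ω₂ * a)) :
    ∫ x in (-a)..a, Real.cos (ω₁ * x) * Real.cos (ω₂ * x) = 0 := by
  have hd : ω₁ - ω₂ ≠ 0 := sub_ne_zero.mpr hne
  have hs : ω₁ + ω₂ ≠ 0 := by positivity
  set d := ω₁ - ω₂ with hdd
  set s := ω₁ + ω₂ with hss
  -- antiderivative
  have hF : ∀ x : ℝ, HasDerivAt
      (fun x => Real.sin (d * x) / (2 * d) + Real.sin (s * x) / (2 * s))
      (Real.cos (ω₁ * x) * Real.cos (ω₂ * x)) x := by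
    intro x
    have h1 : HasDerivAt (fun x : ℝ => Real.sin (d * x) / (2 * d))
        (Real.cos (d * x) / 2) x := by
      have := ((Real.hasDerivAt_sin (d * x)).comp x
        ((hasDerivAt_id x).const_mul d)).div_const (2 * d)
      simpa [mul_comm, mul_div_assoc, div_div] using this.congr_deriv (by
        field_simp)
    have h2 : HasDerivAt (fun x : ℝ => Real.sin (s * x) / (2 * s))
        (Real.cos (s * x) / 2) x := by
      have := ((Real.hasDerivAt_sin (s * x)).comp x
        ((hasDerivAt_id x).const_mul s)).div_const (2 * s)
      simpa [mul_comm, mul_div_assoc, div_div] using this.congr_deriv (by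
        field_simp)
    have := h1.add h2
    have heq : Real.cos (d * x) / 2 + Real.cos (s * x) / 2
        = Real.cos (ω₁ * x) * Real.cos (ω₂ * x) := by
      have h := Real.cos_sub (ω₁ * x) (ω₂ * x)
      have h' := Real.cos_add (ω₁ * x) (ω₂ * x)
      have hdx : d * x = ω₁ * x - ω₂ * x := by rw [hdd]; ring
      have hsx : s * x = ω₁ * x + ω₂ * x := by rw [hss]; ring
      rw [hdx, hsx, h, h']
      ring
    rw [heq] at this
    exact this
  have hcont : IntervalIntegrable (fun x => Real.cos (ω₁ * x) * Real.cos (ω₂ * x))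
      MeasureTheory.volume (-a) a := by
    apply Continuous.intervalIntegrable
    continuity
  have hval := intervalIntegral.integral_eq_sub_of_hasDerivAt (fun x _ => hF x) hcont
  rw [hval]
  -- now pure trig algebra
  have hc₁ : Real.cos (ω₁ * a) ≠ 0 := by
    intro h
    rw [Real.tan_eq_sin_div_cos, h, div_zero, mul_zero] at htrans₁
    exact absurd htrans₁ (by positivity)
  have hc₂ : Real.cos (ω₂ * a) ≠ 0 := by
    intro h
    rw [Real.tan_eq_sin_div_cos, h, div_zero, mul_zero] at htrans₂
    exact absurd htrans₂ (by positivity)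
  have hrel : ω₁ * Real.sin (ω₁ * a) * Real.cos (ω₂ * a)
      = ω₂ * Real.sin (ω₂ * a) * Real.cos (ω₁ * a) := by
    have h := htrans₁.symm.trans htrans₂
    rw [Real.tan_eq_sin_div_cos, Real.tan_eq_sin_div_cos] at h
    field_simp at h
    rw [mul_comm a ω₂, eq_div_iff hc₂] at h
    linarith [h]
  have hda : d * a = ω₁ * a - ω₂ * a := by rw [hdd]; ring
  have hsa : s * a = ω₁ * a + ω₂ * a := by rw [hss]; ring
  have hdna : d * (-a) = -(ω₁ * a - ω₂ * a) := by rw [hdd]; ring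
  have hsna : s * (-a) = -(ω₁ * a + ω₂ * a) := by rw [hss]; ring
  rw [hda, hsa, hdna, hsna, Real.sin_neg, Real.sin_neg, Real.sin_sub, Real.sin_add]
  field_simp
  ring_nf
  ring_nf at hrel
  linarith [hrel]
end
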